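/- Fix a fooling set (S_1, T_1), ..., (S_r, T_r) for the connectivity function f (f(S,T)=0 iff the induced subgraph of T on S is connected), where each S_i ⊆ [n], |S_i| > 1, and each T_i is a tree on [n]. Fix x ∈ [n] and k ∈ [r], and let Z_{x,k} be the set of indices i ∈ [r] such that (1) S_i is connected in T_k, and (2) there exist a, b ∈ S_i with (a,x,b) a witness for f(S_i, T_i) = 1. Then |Z_{x,k}| ≤ n - 1. -/

import Mathlib

/-- `x` lies on the (unique) path in `G` between `a` and `b`. -/
def onPath {V : Type*} (G : SimpleGraph V) (a x b : V) : Prop :=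
  ∀ p : G.Walk a b, p.IsPath → x ∈ p.support

/-- The graph `G` with the vertex `x` (i.e. all edges at `x`) deleted. -/
private def Gdel {V : Type*} (G : SimpleGraph V) (x : V) : SimpleGraph V where
  Adj u v := G.Adj u v ∧ u ≠ x ∧ v ≠ x
  symm := ⟨fun _ _ ⟨h, hu, hv⟩ => ⟨h.symm, hv, hu⟩⟩
  loopless := ⟨fun u ⟨h, _, _⟩ => h.ne rfl⟩

private lemma gdel_support_ne {V : Type*} {G : SimpleGraph V} {x : V} :
    ∀ {a b : V} (w : (Gdel G x).Walk a b), a ≠ x → ∀ v ∈ w.support, v ≠ x := by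
  intro a b w
  induction w with
  | nil =>
    intro ha v hv
    rw [SimpleGraph.Walk.support_nil, List.mem_singleton] at hv
    exact hv ▸ ha
  | cons h p ih =>
    intro ha v hv
    rw [SimpleGraph.Walk.support_cons, List.mem_cons] at hv
    rcases hv with rfl | hv
    · exact ha
    · exact ih h.2.2 v hv

private lemma noReach {V : Type*} {G : SimpleGraph V} {a x b : V}
    (ha : a ≠ x) (hp : onPath G a x b) : ¬ (Gdel G x).Reachable a b := by
  classical
  rintro ⟨w⟩
  have hsub : ∀ e ∈ w.edges, e ∈ G.edgeSet := by
    intro e he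
    have := w.edges_subset_edgeSet he
    induction e with
    | h u v => exact this.1
  set w' : G.Walk a b := w.transfer G hsub with hw'
  have hxp : x ∈ w'.toPath.1.support := hp w'.toPath.1 w'.toPath.2
  have hxw : x ∈ w.support := by
    have := SimpleGraph.Walk.support_toPath_subset w' hxp
    rwa [hw', SimpleGraph.Walk.support_transfer] at this
  exact gdel_support_ne w ha x hxw rfl

private lemma flipEdge {V' : Type*} {H : SimpleGraph V'} (P : V' → Prop) :
    ∀ {a b : V'} (_ : H.Walk a b), P a → ¬ P b →
      ∃ u v, H.Adj u v ∧ P u ∧ ¬ P v := by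
  intro a b w
  induction w with
  | nil => intro hPa hPb; exact absurd hPa hPb
  | @cons a c b h p ih =>
    intro hPa hPb
    by_cases hc : P c
    · exact ih hc hPb
    · exact ⟨a, c, h, hPa, hc⟩

private lemma connReach {V : Type*} {G : SimpleGraph V} {Sv : Set V} {x : V}
    (hc : (G.induce Sv).Connected) (hx : x ∉ Sv) {s t : V}
    (hs : s ∈ Sv) (ht : t ∈ Sv) : (Gdel G x).Reachable s t := by
  have hr : (G.induce Sv).Reachable ⟨s, hs⟩ ⟨t, ht⟩ := hc.preconnected _ _
  let φ : G.induce Sv →g Gdel G x :=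
    ⟨fun v => v.val, fun {u v} huv =>
      ⟨huv, fun h => hx (h ▸ u.2), fun h => hx (h ▸ v.2)⟩⟩
  obtain ⟨w⟩ := hr
  exact ⟨(w.map φ).copy rfl rfl⟩

theorem stmt_7 {n r : ℕ} (S : Fin r → Set (Fin n))
    (T : Fin r → SimpleGraph (Fin n))
    (hT : ∀ i, (T i).IsTree) (hS : ∀ i, 1 < (S i).ncard)
    (hdiag : ∀ j, ¬ ((T j).induce (S j)).Connected)
    (hoff : ∀ i j, i ≠ j →
      ((T j).induce (S i)).Connected ∨ ((T i).induce (S j)).Connected)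
    (x : Fin n) (k : Fin r) :
    {i : Fin r | ((T k).induce (S i)).Connected ∧
      ∃ a ∈ S i, ∃ b ∈ S i, x ∉ S i ∧ onPath (T i) a x b}.ncard ≤ n - 1 := by
  classical
  set Z := {i : Fin r | ((T k).induce (S i)).Connected ∧
      ∃ a ∈ S i, ∃ b ∈ S i, x ∉ S i ∧ onPath (T i) a x b} with hZ
  -- for each i in Z, find a T k edge inside S i whose endpoints are
  -- separated by x in T i
  have key : ∀ i ∈ Z, ∃ u v : Fin n, (T k).Adj u v ∧ u ∈ S i ∧ v ∈ S i ∧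
      ¬ (Gdel (T i) x).Reachable u v := by
    rintro i ⟨hconn, a, ha, b, hb, hxS, hpath⟩
    have hax : a ≠ x := fun h => hxS (h ▸ ha)
    have hnr : ¬ (Gdel (T i) x).Reachable a b := noReach hax hpath
    obtain ⟨w⟩ := hconn.preconnected ⟨a, ha⟩ ⟨b, hb⟩
    obtain ⟨u, v, hadj, hu, hv⟩ :=
      flipEdge (fun z : (S i : Set (Fin n)) => (Gdel (T i) x).Reachable a z.val)
        w (SimpleGraph.Reachable.refl a) hnr
    exact ⟨u.val, v.val, hadj, u.2, v.2, fun h => hv (hu.trans h)⟩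
  have hxnot : ∀ i ∈ Z, x ∉ S i := by
    rintro i ⟨_, a, ha, b, hb, hxS, hpath⟩
    exact hxS
  choose u v hadj hu hv hnr using key
  -- the chosen edge
  let f : Fin r → Sym2 (Fin n) := fun i =>
    if h : i ∈ Z then s(u i h, v i h) else s(x, x)
  have hmem : ∀ i ∈ Z, f i ∈ (T k).edgeSet := by
    intro i hi
    simp only [f, dif_pos hi, SimpleGraph.mem_edgeSet]
    exact hadj i hi
  have hinj : Set.InjOn f Z := by
    intro i hi j hj heq
    by_contra hne
    simp only [f, dif_pos hi, dif_pos hj] at heq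
    rw [Sym2.eq_iff] at heq
    rcases hoff i j hne with hc | hc
    · -- S i connected in T j; but the shared edge endpoints are in S i and
      -- separated by x in T j
      have hr : (Gdel (T j) x).Reachable (u i hi) (v i hi) :=
        connReach hc (hxnot i hi) (hu i hi) (hv i hi)
      rcases heq with ⟨h1, h2⟩ | ⟨h1, h2⟩
      · rw [h1, h2] at hr; exact hnr j hj hr
      · rw [h1, h2] at hr; exact hnr j hj hr.symm
    · have hr : (Gdel (T i) x).Reachable (u j hj) (v j hj) :=
        connReach hc (hxnot j hj) (hu j hj) (hv j hj)
      rcases heq with ⟨h1, h2⟩ | ⟨h1, h2⟩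
      · rw [← h1, ← h2] at hr; exact hnr i hi hr
      · rw [← h2, ← h1] at hr; exact hnr i hi hr.symm
  have hfin : (T k).edgeSet.Finite := Set.toFinite _
  have hle : Z.ncard ≤ (T k).edgeSet.ncard :=
    Set.ncard_le_ncard_of_injOn f hmem hinj hfin
  have hcard : (T k).edgeSet.ncard = n - 1 := by
    letI : Fintype (T k).edgeSet := Fintype.ofFinite _
    have h1 := (hT k).card_edgeFinset
    rw [Fintype.card_fin] at h1
    rw [Set.ncard_eq_toFinset_card']
    show (T k).edgeFinset.card = n - 1
    omega
  rw [hcard] at hle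
  exact hle
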